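/- For all λμ-terms t, u and μ-variable α, the λ̄μμ̃-translation of the structural substitution (t[α := ⟨α⟩(u ·)])† reduces by zero or more linear λ̄μμ̃-reduction steps to t†[α := μ̃y.⟨u† | y · α⟩] (y fresh), and likewise for λμ-commands. -/

import Mathlib

set_option autoImplicit true

namespace CHSim

/-- Lift a de Bruijn renaming under a binder. -/
def upr (ξ : ℕ → ℕ) : ℕ → ℕ
  | 0 => 0
  | k+1 => ξ k + 1

/-! ## The λμ-calculus (de Bruijn representation).

λ-variables and μ-variables each have their own name space of de Bruijn
indices.  `abs t` is `λx.t` (binding λ-index 0) and `mabs c` is `μα.c`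
(binding μ-index 0); `cmd a t` is the command `[a]t`. -/

mutual
  inductive Tm : Type
    | var : ℕ → Tm
    | abs : Tm → Tm
    | app : Tm → Tm → Tm
    | mabs : Cm → Tm
  inductive Cm : Type
    | cmd : ℕ → Tm → Cm
end

/-- λμ-contexts `e ::= ⟨α⟩ | ⟨β⟩(t ·) | e · t`. -/
inductive Ct : Type
  | cvar : ℕ → Ct
  | push : ℕ → Tm → Ct
  | cons : Ct → Tm → Ct

/-- Filling a λμ-context with a term: `⟨α⟩⟨t⟩ = [α]t`,
`(⟨β⟩(u ·))⟨t⟩ = [β](u t)`, `(h · u)⟨t⟩ = h⟨t u⟩`. -/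
def fill : Ct → Tm → Cm
  | .cvar a, t => .cmd a t
  | .push b u, t => .cmd b (.app u t)
  | .cons h u, t => fill h (.app t u)

mutual
  /-- Renaming of λ-variables in λμ-terms. -/
  def renLT (ξ : ℕ → ℕ) : Tm → Tm
    | .var x => .var (ξ x)
    | .abs t => .abs (renLT (upr ξ) t)
    | .app t u => .app (renLT ξ t) (renLT ξ u)
    | .mabs c => .mabs (renLC ξ c)
  /-- Renaming of λ-variables in λμ-commands. -/
  def renLC (ξ : ℕ → ℕ) : Cm → Cm
    | .cmd a t => .cmd a (renLT ξ t)
end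

mutual
  /-- Renaming of μ-variables in λμ-terms. -/
  def renMT (ξ : ℕ → ℕ) : Tm → Tm
    | .var x => .var x
    | .abs t => .abs (renMT ξ t)
    | .app t u => .app (renMT ξ t) (renMT ξ u)
    | .mabs c => .mabs (renMC (upr ξ) c)
  /-- Renaming of μ-variables in λμ-commands. -/
  def renMC (ξ : ℕ → ℕ) : Cm → Cm
    | .cmd a t => .cmd (ξ a) (renMT ξ t)
end

/-- Renaming of λ-variables in λμ-contexts. -/
def renLE (ξ : ℕ → ℕ) : Ct → Ct
  | .cvar a => .cvar a
  | .push b t => .push b (renLT ξ t)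
  | .cons e t => .cons (renLE ξ e) (renLT ξ t)

/-- Renaming of μ-variables in λμ-contexts. -/
def renME (ξ : ℕ → ℕ) : Ct → Ct
  | .cvar a => .cvar (ξ a)
  | .push b t => .push (ξ b) (renMT ξ t)
  | .cons e t => .cons (renME ξ e) (renMT ξ t)

/-- Lifting a λ-substitution under a λ-binder. -/
def upsL (σ : ℕ → Tm) : ℕ → Tm
  | 0 => .var 0
  | k+1 => renLT Nat.succ (σ k)

mutual
  /-- (Capture-avoiding) substitution for λ-variables in λμ-terms. -/
  def lsubT (σ : ℕ → Tm) : Tm → Tm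
    | .var x => σ x
    | .abs t => .abs (lsubT (upsL σ) t)
    | .app t u => .app (lsubT σ t) (lsubT σ u)
    | .mabs c => .mabs (lsubC (fun k => renMT Nat.succ (σ k)) c)
  /-- Substitution for λ-variables in λμ-commands. -/
  def lsubC (σ : ℕ → Tm) : Cm → Cm
    | .cmd a t => .cmd a (lsubT σ t)
end

/-- Substitution for λ-variables in λμ-contexts. -/
def lsubE (σ : ℕ → Tm) : Ct → Ct
  | .cvar a => .cvar a
  | .push b t => .push b (lsubT σ t)
  | .cons e t => .cons (lsubE σ e) (lsubT σ t)

/-- The substitution replacing the λ-variable `x` by `u`. -/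
def sub1L (x : ℕ) (u : Tm) : ℕ → Tm := fun k => if k = x then u else .var k

/-- The β-substitution replacing the bound λ-variable 0 by `u`. -/
def sub0L (u : Tm) : ℕ → Tm
  | 0 => u
  | k+1 => .var k

/-- Lifting a structural (μ-)substitution under a μ-binder. -/
def upsM (σ : ℕ → Ct) : ℕ → Ct
  | 0 => .cvar 0
  | k+1 => renME Nat.succ (σ k)

mutual
  /-- Structural substitution of λμ-contexts for μ-variables in λμ-terms:
  every subcommand `[α]u` is replaced by `(σ α)⟨u[σ]⟩`. -/
  def msubT (σ : ℕ → Ct) : Tm → Tm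
    | .var x => .var x
    | .abs t => .abs (msubT (fun k => renLE Nat.succ (σ k)) t)
    | .app t u => .app (msubT σ t) (msubT σ u)
    | .mabs c => .mabs (msubC (upsM σ) c)
  /-- Structural substitution in λμ-commands. -/
  def msubC (σ : ℕ → Ct) : Cm → Cm
    | .cmd a t => fill (σ a) (msubT σ t)
end

/-- Structural substitution in λμ-contexts (the head variable of
`⟨β⟩(t ·)` is, by the freshness convention of the translations,
never the substituted variable, so it is left untouched). -/
def msubE (σ : ℕ → Ct) : Ct → Ct
  | .cvar a => σ a
  | .push b t => .push b (msubT σ t)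
  | .cons e t => .cons (msubE σ e) (msubT σ t)

/-- The structural substitution replacing the μ-variable `a` by the context `e`. -/
def sub1M (a : ℕ) (e : Ct) : ℕ → Ct := fun k => if k = a then e else .cvar k

/-- The structural substitution replacing the bound μ-variable 0 by the
context `e` (removing the binder). -/
def sub0M (e : Ct) : ℕ → Ct
  | 0 => e
  | k+1 => .cvar k

mutual
  /-- Number of free occurrences of the λ-variable `x` in a λμ-term. -/
  def cntLT (x : ℕ) : Tm → ℕ
    | .var y => if y = x then 1 else 0
    | .abs t => cntLT (x+1) t
    | .app t u => cntLT x t + cntLT x u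
    | .mabs c => cntLC x c
  /-- Number of free occurrences of the λ-variable `x` in a λμ-command. -/
  def cntLC (x : ℕ) : Cm → ℕ
    | .cmd _ t => cntLT x t
end

/-- λμ-values `v ::= x | λx.t`. -/
inductive IsVal : Tm → Prop
  | var (x : ℕ) : IsVal (.var x)
  | abs (t : Tm) : IsVal (.abs t)

/-! ### Reduction in λμ: congruence closure of root rules -/

mutual
  /-- Congruence (compatible) closure of root relations, term level. -/
  inductive KT (R1 : Tm → Tm → Prop) (R2 : Cm → Cm → Prop) : Tm → Tm → Prop
    | root {t t'} : R1 t t' → KT R1 R2 t t'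
    | absC {t t'} : KT R1 R2 t t' → KT R1 R2 (.abs t) (.abs t')
    | appL {t t'} (u) : KT R1 R2 t t' → KT R1 R2 (.app t u) (.app t' u)
    | appR (t) {u u'} : KT R1 R2 u u' → KT R1 R2 (.app t u) (.app t u')
    | mabsC {c c'} : KC R1 R2 c c' → KT R1 R2 (.mabs c) (.mabs c')
  /-- Congruence (compatible) closure of root relations, command level. -/
  inductive KC (R1 : Tm → Tm → Prop) (R2 : Cm → Cm → Prop) : Cm → Cm → Prop
    | root {c c'} : R2 c c' → KC R1 R2 c c'
    | cmdC (a) {t t'} : KT R1 R2 t t' → KC R1 R2 (.cmd a t) (.cmd a t')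
end

/-- Term-level root rules of the undirected λμ-calculus: β, μ, μ', θ. -/
inductive RootT : Tm → Tm → Prop
  | beta (u t : Tm) : RootT (.app (.abs u) t) (lsubT (sub0L t) u)
  | mu (c : Cm) (t : Tm) : RootT (.app (.mabs c) t)
      (.mabs (msubC (sub1M 0 (.cons (.cvar 0) (renMT Nat.succ t))) c))
  | mu' (t : Tm) (c : Cm) : RootT (.app t (.mabs c))
      (.mabs (msubC (sub1M 0 (.push 0 (renMT Nat.succ t))) c))
  | theta (t : Tm) : RootT (.mabs (.cmd 0 (renMT Nat.succ t))) t

/-- Command-level root rule of the λμ-calculus: ρ. -/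
inductive RootC : Cm → Cm → Prop
  | rho (b : ℕ) (c : Cm) : RootC (.cmd b (.mabs c)) (msubC (sub0M (.cvar b)) c)

/-- Term-level *linear* root rules of the λμ-calculus: θ, and β when the
argument is a variable or the bound variable occurs exactly once. -/
inductive RootTlin : Tm → Tm → Prop
  | beta (u t : Tm) : ((∃ y, t = Tm.var y) ∨ cntLT 0 u = 1) →
      RootTlin (.app (.abs u) t) (lsubT (sub0L t) u)
  | theta (t : Tm) : RootTlin (.mabs (.cmd 0 (renMT Nat.succ t))) t

/-- Term-level root rules of call-by-name λμ: β, μ, θ (no μ'). -/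
inductive RootTn : Tm → Tm → Prop
  | beta (u t : Tm) : RootTn (.app (.abs u) t) (lsubT (sub0L t) u)
  | mu (c : Cm) (t : Tm) : RootTn (.app (.mabs c) t)
      (.mabs (msubC (sub1M 0 (.cons (.cvar 0) (renMT Nat.succ t))) c))
  | theta (t : Tm) : RootTn (.mabs (.cmd 0 (renMT Nat.succ t))) t

/-- Term-level root rules of call-by-value λμ: βv, μv, μ', θ. -/
inductive RootTv : Tm → Tm → Prop
  | betav (u t : Tm) : IsVal t → RootTv (.app (.abs u) t) (lsubT (sub0L t) u)
  | muv (c : Cm) (t : Tm) : IsVal t → RootTv (.app (.mabs c) t)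
      (.mabs (msubC (sub1M 0 (.cons (.cvar 0) (renMT Nat.succ t))) c))
  | mu' (t : Tm) (c : Cm) : RootTv (.app t (.mabs c))
      (.mabs (msubC (sub1M 0 (.push 0 (renMT Nat.succ t))) c))
  | theta (t : Tm) : RootTv (.mabs (.cmd 0 (renMT Nat.succ t))) t

/-- Term-level *linear call-by-value* root rules of λμ. -/
inductive RootTvlin : Tm → Tm → Prop
  | betav (u t : Tm) : IsVal t → ((∃ y, t = Tm.var y) ∨ cntLT 0 u = 1) →
      RootTvlin (.app (.abs u) t) (lsubT (sub0L t) u)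
  | theta (t : Tm) : RootTvlin (.mabs (.cmd 0 (renMT Nat.succ t))) t

/-- One-step λμ-reduction (β, μ, μ', ρ, θ), terms. -/
abbrev StepT := KT RootT RootC
/-- One-step λμ-reduction (β, μ, μ', ρ, θ), commands. -/
abbrev StepC := KC RootT RootC
/-- One-step linear λμ-reduction, terms. -/
abbrev LStepT := KT RootTlin RootC
/-- One-step linear λμ-reduction, commands. -/
abbrev LStepC := KC RootTlin RootC
/-- One-step call-by-name λμ-reduction, terms. -/
abbrev StepNT := KT RootTn RootC
/-- One-step call-by-name λμ-reduction, commands. -/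
abbrev StepNC := KC RootTn RootC
/-- One-step call-by-value λμ-reduction, terms. -/
abbrev StepVT := KT RootTv RootC
/-- One-step call-by-value λμ-reduction, commands. -/
abbrev StepVC := KC RootTv RootC
/-- One-step linear call-by-value λμ-reduction, terms. -/
abbrev LStepVT := KT RootTvlin RootC
/-- One-step linear call-by-value λμ-reduction, commands. -/
abbrev LStepVC := KC RootTvlin RootC

/-- Reflexive-transitive closure. -/
abbrev Star {α : Type} (r : α → α → Prop) : α → α → Prop := Relation.ReflTransGen r

/-! ## The λ̄μμ̃-calculus (de Bruijn representation). -/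

mutual
  inductive BTm : Type
    | var : ℕ → BTm
    | abs : BTm → BTm
    | mabs : BCm → BTm
  inductive BCm : Type
    | cut : BTm → BCt → BCm
  inductive BCt : Type
    | cvar : ℕ → BCt
    | cons : BTm → BCt → BCt
    | tmu : BCm → BCt
end

mutual
  /-- Renaming of λ-variables in λ̄μμ̃-terms. -/
  def brenLT (ξ : ℕ → ℕ) : BTm → BTm
    | .var x => .var (ξ x)
    | .abs t => .abs (brenLT (upr ξ) t)
    | .mabs c => .mabs (brenLC ξ c)
  def brenLC (ξ : ℕ → ℕ) : BCm → BCm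
    | .cut t e => .cut (brenLT ξ t) (brenLE ξ e)
  def brenLE (ξ : ℕ → ℕ) : BCt → BCt
    | .cvar a => .cvar a
    | .cons t e => .cons (brenLT ξ t) (brenLE ξ e)
    | .tmu c => .tmu (brenLC (upr ξ) c)
end

mutual
  /-- Renaming of μ-variables in λ̄μμ̃-terms. -/
  def brenMT (ξ : ℕ → ℕ) : BTm → BTm
    | .var x => .var x
    | .abs t => .abs (brenMT ξ t)
    | .mabs c => .mabs (brenMC (upr ξ) c)
  def brenMC (ξ : ℕ → ℕ) : BCm → BCm
    | .cut t e => .cut (brenMT ξ t) (brenME ξ e)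
  def brenME (ξ : ℕ → ℕ) : BCt → BCt
    | .cvar a => .cvar (ξ a)
    | .cons t e => .cons (brenMT ξ t) (brenME ξ e)
    | .tmu c => .tmu (brenMC ξ c)
end

def bupsL (σ : ℕ → BTm) : ℕ → BTm
  | 0 => .var 0
  | k+1 => brenLT Nat.succ (σ k)

mutual
  /-- Substitution for λ-variables in λ̄μμ̃-terms. -/
  def blsubT (σ : ℕ → BTm) : BTm → BTm
    | .var x => σ x
    | .abs t => .abs (blsubT (bupsL σ) t)
    | .mabs c => .mabs (blsubC (fun k => brenMT Nat.succ (σ k)) c)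
  def blsubC (σ : ℕ → BTm) : BCm → BCm
    | .cut t e => .cut (blsubT σ t) (blsubE σ e)
  def blsubE (σ : ℕ → BTm) : BCt → BCt
    | .cvar a => .cvar a
    | .cons t e => .cons (blsubT σ t) (blsubE σ e)
    | .tmu c => .tmu (blsubC (bupsL σ) c)
end

def bsub1L (x : ℕ) (u : BTm) : ℕ → BTm := fun k => if k = x then u else .var k

def bsub0L (u : BTm) : ℕ → BTm
  | 0 => u
  | k+1 => .var k

def bupsM (σ : ℕ → BCt) : ℕ → BCt
  | 0 => .cvar 0
  | k+1 => brenME Nat.succ (σ k)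

mutual
  /-- Structural substitution of contexts for μ-variables in λ̄μμ̃-terms. -/
  def bmsubT (σ : ℕ → BCt) : BTm → BTm
    | .var x => .var x
    | .abs t => .abs (bmsubT (fun k => brenLE Nat.succ (σ k)) t)
    | .mabs c => .mabs (bmsubC (bupsM σ) c)
  def bmsubC (σ : ℕ → BCt) : BCm → BCm
    | .cut t e => .cut (bmsubT σ t) (bmsubE σ e)
  def bmsubE (σ : ℕ → BCt) : BCt → BCt
    | .cvar a => σ a
    | .cons t e => .cons (bmsubT σ t) (bmsubE σ e)
    | .tmu c => .tmu (bmsubC (fun k => brenLE Nat.succ (σ k)) c)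
end

def bsub1M (a : ℕ) (e : BCt) : ℕ → BCt := fun k => if k = a then e else .cvar k

def bsub0M (e : BCt) : ℕ → BCt
  | 0 => e
  | k+1 => .cvar k

mutual
  /-- Number of free occurrences of the λ-variable `x` in a λ̄μμ̃-term. -/
  def bcntLT (x : ℕ) : BTm → ℕ
    | .var y => if y = x then 1 else 0
    | .abs t => bcntLT (x+1) t
    | .mabs c => bcntLC x c
  def bcntLC (x : ℕ) : BCm → ℕ
    | .cut t e => bcntLT x t + bcntLE x e
  def bcntLE (x : ℕ) : BCt → ℕ
    | .cvar _ => 0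
    | .cons t e => bcntLT x t + bcntLE x e
    | .tmu c => bcntLC (x+1) c
end

mutual
  /-- Number of free occurrences of the μ-variable `a` in a λ̄μμ̃-term. -/
  def bcntMT (a : ℕ) : BTm → ℕ
    | .var _ => 0
    | .abs t => bcntMT a t
    | .mabs c => bcntMC (a+1) c
  def bcntMC (a : ℕ) : BCm → ℕ
    | .cut t e => bcntMT a t + bcntME a e
  def bcntME (a : ℕ) : BCt → ℕ
    | .cvar b => if b = a then 1 else 0
    | .cons t e => bcntMT a t + bcntME a e
    | .tmu c => bcntMC a c
end

/-- λ̄μμ̃-values `v ::= x | λx.t`. -/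
inductive BIsVal : BTm → Prop
  | var (x : ℕ) : BIsVal (.var x)
  | abs (t : BTm) : BIsVal (.abs t)

/-- Stacks (the contexts of λ̄μμ̃_T): `s ::= α | t · s`. -/
inductive IsStk : BCt → Prop
  | cvar (a : ℕ) : IsStk (.cvar a)
  | cons (t : BTm) {s : BCt} : IsStk s → IsStk (.cons t s)

/-! ### Reduction in λ̄μμ̃: congruence closure of root rules -/

mutual
  inductive JT (R1 : BTm → BTm → Prop) (R2 : BCm → BCm → Prop) : BTm → BTm → Prop
    | root {t t'} : R1 t t' → JT R1 R2 t t'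
    | absC {t t'} : JT R1 R2 t t' → JT R1 R2 (.abs t) (.abs t')
    | mabsC {c c'} : JC R1 R2 c c' → JT R1 R2 (.mabs c) (.mabs c')
  inductive JC (R1 : BTm → BTm → Prop) (R2 : BCm → BCm → Prop) : BCm → BCm → Prop
    | root {c c'} : R2 c c' → JC R1 R2 c c'
    | cutL {t t'} (e) : JT R1 R2 t t' → JC R1 R2 (.cut t e) (.cut t' e)
    | cutR (t) {e e'} : JE R1 R2 e e' → JC R1 R2 (.cut t e) (.cut t e')
  inductive JE (R1 : BTm → BTm → Prop) (R2 : BCm → BCm → Prop) : BCt → BCt → Prop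
    | consL {t t'} (e) : JT R1 R2 t t' → JE R1 R2 (.cons t e) (.cons t' e)
    | consR (t) {e e'} : JE R1 R2 e e' → JE R1 R2 (.cons t e) (.cons t e')
    | tmuC {c c'} : JC R1 R2 c c' → JE R1 R2 (.tmu c) (.tmu c')
end

/-- The term-level root rule of λ̄μμ̃: θ (shared by all evaluation disciplines). -/
inductive BRootT : BTm → BTm → Prop
  | theta (t : BTm) : BRootT (.mabs (.cut (brenMT Nat.succ t) (.cvar 0))) t

/-- Command-level root rules of the undirected λ̄μμ̃-calculus: β, μ, μ̃. -/
inductive BRootC : BCm → BCm → Prop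
  | beta (u t : BTm) (e : BCt) :
      BRootC (.cut (.abs u) (.cons t e)) (.cut t (.tmu (.cut u (brenLE Nat.succ e))))
  | mu (c : BCm) (e : BCt) : BRootC (.cut (.mabs c) e) (bmsubC (bsub0M e) c)
  | mutilde (t : BTm) (c : BCm) : BRootC (.cut t (.tmu c)) (blsubC (bsub0L t) c)

/-- Command-level *linear* root rules of λ̄μμ̃: β always; μ (resp. μ̃) when the
substituted context (resp. term) is a variable or the bound variable occurs
exactly once in the command. -/
inductive BRootClin : BCm → BCm → Prop
  | beta (u t : BTm) (e : BCt) :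
      BRootClin (.cut (.abs u) (.cons t e)) (.cut t (.tmu (.cut u (brenLE Nat.succ e))))
  | mu (c : BCm) (e : BCt) : ((∃ a, e = BCt.cvar a) ∨ bcntMC 0 c = 1) →
      BRootClin (.cut (.mabs c) e) (bmsubC (bsub0M e) c)
  | mutilde (t : BTm) (c : BCm) : ((∃ x, t = BTm.var x) ∨ bcntLC 0 c = 1) →
      BRootClin (.cut t (.tmu c)) (blsubC (bsub0L t) c)

/-- Command-level root rules of call-by-name λ̄μμ̃ (λ̄μμ̃_T): β, μₙ (stacks), μ̃. -/
inductive BRootCn : BCm → BCm → Prop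
  | beta (u t : BTm) (e : BCt) :
      BRootCn (.cut (.abs u) (.cons t e)) (.cut t (.tmu (.cut u (brenLE Nat.succ e))))
  | mun (c : BCm) (s : BCt) : IsStk s → BRootCn (.cut (.mabs c) s) (bmsubC (bsub0M s) c)
  | mutilde (t : BTm) (c : BCm) : BRootCn (.cut t (.tmu c)) (blsubC (bsub0L t) c)

/-- Command-level *linear call-by-name* root rules of λ̄μμ̃. -/
inductive BRootCnlin : BCm → BCm → Prop
  | beta (u t : BTm) (e : BCt) :
      BRootCnlin (.cut (.abs u) (.cons t e)) (.cut t (.tmu (.cut u (brenLE Nat.succ e))))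
  | mun (c : BCm) (s : BCt) : IsStk s → ((∃ a, s = BCt.cvar a) ∨ bcntMC 0 c = 1) →
      BRootCnlin (.cut (.mabs c) s) (bmsubC (bsub0M s) c)
  | mutilde (t : BTm) (c : BCm) : ((∃ x, t = BTm.var x) ∨ bcntLC 0 c = 1) →
      BRootCnlin (.cut t (.tmu c)) (blsubC (bsub0L t) c)

/-- Command-level root rules of call-by-value λ̄μμ̃ (λ̄μμ̃_Q): β, μ, μ̃ᵥ (values). -/
inductive BRootCv : BCm → BCm → Prop
  | beta (u t : BTm) (e : BCt) :
      BRootCv (.cut (.abs u) (.cons t e)) (.cut t (.tmu (.cut u (brenLE Nat.succ e))))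
  | mu (c : BCm) (e : BCt) : BRootCv (.cut (.mabs c) e) (bmsubC (bsub0M e) c)
  | mutildev (v : BTm) (c : BCm) : BIsVal v →
      BRootCv (.cut v (.tmu c)) (blsubC (bsub0L v) c)

/-- Command-level *linear call-by-value* root rules of λ̄μμ̃. -/
inductive BRootCvlin : BCm → BCm → Prop
  | beta (u t : BTm) (e : BCt) :
      BRootCvlin (.cut (.abs u) (.cons t e)) (.cut t (.tmu (.cut u (brenLE Nat.succ e))))
  | mu (c : BCm) (e : BCt) : ((∃ a, e = BCt.cvar a) ∨ bcntMC 0 c = 1) →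
      BRootCvlin (.cut (.mabs c) e) (bmsubC (bsub0M e) c)
  | mutildev (v : BTm) (c : BCm) : BIsVal v → ((∃ x, v = BTm.var x) ∨ bcntLC 0 c = 1) →
      BRootCvlin (.cut v (.tmu c)) (blsubC (bsub0L v) c)

/-- Command-level root rules with β' instead of β: β', μ, μ̃. -/
inductive BRootCp : BCm → BCm → Prop
  | beta' (u t : BTm) (e : BCt) :
      BRootCp (.cut (.abs u) (.cons t e)) (.cut (blsubT (bsub0L t) u) e)
  | mu (c : BCm) (e : BCt) : BRootCp (.cut (.mabs c) e) (bmsubC (bsub0M e) c)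
  | mutilde (t : BTm) (c : BCm) : BRootCp (.cut t (.tmu c)) (blsubC (bsub0L t) c)

/-- Command-level call-by-name root rules with β': β', μₙ, μ̃. -/
inductive BRootCnp : BCm → BCm → Prop
  | beta' (u t : BTm) (e : BCt) :
      BRootCnp (.cut (.abs u) (.cons t e)) (.cut (blsubT (bsub0L t) u) e)
  | mun (c : BCm) (s : BCt) : IsStk s → BRootCnp (.cut (.mabs c) s) (bmsubC (bsub0M s) c)
  | mutilde (t : BTm) (c : BCm) : BRootCnp (.cut t (.tmu c)) (blsubC (bsub0L t) c)

/-- Command-level call-by-value root rules with β': β' (values), μ, μ̃ᵥ. -/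
inductive BRootCvp : BCm → BCm → Prop
  | beta' (u v : BTm) (e : BCt) : BIsVal v →
      BRootCvp (.cut (.abs u) (.cons v e)) (.cut (blsubT (bsub0L v) u) e)
  | mu (c : BCm) (e : BCt) : BRootCvp (.cut (.mabs c) e) (bmsubC (bsub0M e) c)
  | mutildev (v : BTm) (c : BCm) : BIsVal v →
      BRootCvp (.cut v (.tmu c)) (blsubC (bsub0L v) c)

/-- One-step λ̄μμ̃-reduction (β, μ, μ̃, θ), terms. -/
abbrev BStepT := JT BRootT BRootC
abbrev BStepC := JC BRootT BRootC
abbrev BStepE := JE BRootT BRootC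
/-- One-step linear λ̄μμ̃-reduction. -/
abbrev LBStepT := JT BRootT BRootClin
abbrev LBStepC := JC BRootT BRootClin
abbrev LBStepE := JE BRootT BRootClin
/-- One-step call-by-name λ̄μμ̃-reduction. -/
abbrev BStepNT := JT BRootT BRootCn
abbrev BStepNC := JC BRootT BRootCn
abbrev BStepNE := JE BRootT BRootCn
/-- One-step linear call-by-name λ̄μμ̃-reduction. -/
abbrev LBStepNT := JT BRootT BRootCnlin
abbrev LBStepNC := JC BRootT BRootCnlin
/-- One-step call-by-value λ̄μμ̃-reduction. -/
abbrev BStepVT := JT BRootT BRootCv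
abbrev BStepVC := JC BRootT BRootCv
/-- One-step linear call-by-value λ̄μμ̃-reduction. -/
abbrev LBStepVT := JT BRootT BRootCvlin
abbrev LBStepVC := JC BRootT BRootCvlin
/-- One-step λ̄μμ̃-reduction with β' (β', μ, μ̃, θ). -/
abbrev BStepPT := JT BRootT BRootCp
abbrev BStepPC := JC BRootT BRootCp
/-- One-step call-by-name λ̄μμ̃-reduction with β'. -/
abbrev BStepNPT := JT BRootT BRootCnp
abbrev BStepNPC := JC BRootT BRootCnp
/-- One-step call-by-value λ̄μμ̃-reduction with β'. -/
abbrev BStepVPT := JT BRootT BRootCvp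
abbrev BStepVPC := JC BRootT BRootCvp

/-! ## The translation `(·)†` from λμ to λ̄μμ̃ -/

mutual
  /-- `x† = x`, `(λx.u)† = λx.u†`, `(u v)† = μβ.⟨v† | μ̃y.⟨u† | y·β⟩⟩`
  (`y`, `β` fresh, realized by de Bruijn lifting), `(μα.c)† = μα.c†`. -/
  def dagT : Tm → BTm
    | .var x => .var x
    | .abs t => .abs (dagT t)
    | .app u v => .mabs (.cut (brenMT Nat.succ (dagT v))
        (.tmu (.cut (brenLT Nat.succ (brenMT Nat.succ (dagT u)))
          (.cons (.var 0) (.cvar 0)))))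
    | .mabs c => .mabs (dagC c)
  /-- `([α]t)† = ⟨t† | α⟩`. -/
  def dagC : Cm → BCm
    | .cmd a t => .cut (dagT t) (.cvar a)
end

/-- `⟨α⟩† = α`, `(⟨β⟩(t ·))† = μ̃y.⟨t† | y·β⟩`, `(h · t)† = t† · h†`. -/
def dagE : Ct → BCt
  | .cvar a => .cvar a
  | .push b t => .tmu (.cut (brenLT Nat.succ (dagT t)) (.cons (.var 0) (.cvar b)))
  | .cons e t => .cons (dagT t) (dagE e)

/-! ## The translation `(·)∘` from λ̄μμ̃ to λμ -/

mutual
  /-- `x∘ = x`, `(λx.u)∘ = λx.u∘`, `(μα.c)∘ = μα.c∘`. -/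
  def circT : BTm → Tm
    | .var x => .var x
    | .abs t => .abs (circT t)
    | .mabs c => .mabs (circC c)
  /-- `⟨t | e⟩∘ = e∘⟨t∘⟩`. -/
  def circC : BCm → Cm
    | .cut t e => fill (circE e) (circT t)
  /-- `α∘ = ⟨α⟩`, `(t · h)∘ = h∘ · t∘`,
  `(μ̃x.c)∘ = ⟨β⟩((λx.μδ.c∘) ·)` with `δ ∉ c` (realized by lifting). -/
  def circE : BCt → Ct
    | .cvar a => .cvar a
    | .cons t e => .cons (circE e) (circT t)
    | .tmu c => .push 0 (.abs (.mabs (renMC Nat.succ (circC c))))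
end

/-! ### Auxiliary lemmas for statement 10 -/

theorem upr_hyp {ξ ζ ρ : ℕ → ℕ} (h : ∀ k, ξ (ζ k) = ρ k) :
    ∀ k, upr ξ (upr ζ k) = upr ρ k
  | 0 => rfl
  | k+1 => congrArg Nat.succ (h k)

/-! #### Extensionality helpers -/

theorem bmsubT_ext {σ σ' : ℕ → BCt} (h : ∀ k, σ k = σ' k) (t : BTm) :
    bmsubT σ t = bmsubT σ' t := by rw [show σ = σ' from funext h]
theorem bmsubC_ext {σ σ' : ℕ → BCt} (h : ∀ k, σ k = σ' k) (c : BCm) :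
    bmsubC σ c = bmsubC σ' c := by rw [show σ = σ' from funext h]
theorem blsubT_ext {σ σ' : ℕ → BTm} (h : ∀ k, σ k = σ' k) (t : BTm) :
    blsubT σ t = blsubT σ' t := by rw [show σ = σ' from funext h]
theorem blsubC_ext {σ σ' : ℕ → BTm} (h : ∀ k, σ k = σ' k) (c : BCm) :
    blsubC σ c = blsubC σ' c := by rw [show σ = σ' from funext h]
theorem msubT_ext {σ σ' : ℕ → Ct} (h : ∀ k, σ k = σ' k) (t : Tm) :
    msubT σ t = msubT σ' t := by rw [show σ = σ' from funext h]
theorem msubC_ext {σ σ' : ℕ → Ct} (h : ∀ k, σ k = σ' k) (c : Cm) :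
    msubC σ c = msubC σ' c := by rw [show σ = σ' from funext h]

/-! #### Renaming composition and commutation -/

mutual
theorem brenLT_comp {ξ ζ ρ : ℕ → ℕ} (h : ∀ k, ξ (ζ k) = ρ k) :
    ∀ t, brenLT ξ (brenLT ζ t) = brenLT ρ t
  | .var x => congrArg BTm.var (h x)
  | .abs t => congrArg BTm.abs (brenLT_comp (upr_hyp h) t)
  | .mabs c => congrArg BTm.mabs (brenLC_comp h c)
theorem brenLC_comp {ξ ζ ρ : ℕ → ℕ} (h : ∀ k, ξ (ζ k) = ρ k) :
    ∀ c, brenLC ξ (brenLC ζ c) = brenLC ρ c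
  | .cut t e => by
      simp only [brenLC, brenLT_comp h, brenLE_comp h]
theorem brenLE_comp {ξ ζ ρ : ℕ → ℕ} (h : ∀ k, ξ (ζ k) = ρ k) :
    ∀ e, brenLE ξ (brenLE ζ e) = brenLE ρ e
  | .cvar a => rfl
  | .cons t e => by simp only [brenLE, brenLT_comp h, brenLE_comp h]
  | .tmu c => congrArg BCt.tmu (brenLC_comp (upr_hyp h) c)
end

mutual
theorem brenMT_comp {ξ ζ ρ : ℕ → ℕ} (h : ∀ k, ξ (ζ k) = ρ k) :
    ∀ t, brenMT ξ (brenMT ζ t) = brenMT ρ t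
  | .var _ => rfl
  | .abs t => congrArg BTm.abs (brenMT_comp h t)
  | .mabs c => congrArg BTm.mabs (brenMC_comp (upr_hyp h) c)
theorem brenMC_comp {ξ ζ ρ : ℕ → ℕ} (h : ∀ k, ξ (ζ k) = ρ k) :
    ∀ c, brenMC ξ (brenMC ζ c) = brenMC ρ c
  | .cut t e => by simp only [brenMC, brenMT_comp h, brenME_comp h]
theorem brenME_comp {ξ ζ ρ : ℕ → ℕ} (h : ∀ k, ξ (ζ k) = ρ k) :
    ∀ e, brenME ξ (brenME ζ e) = brenME ρ e
  | .cvar a => congrArg BCt.cvar (h a)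
  | .cons t e => by simp only [brenME, brenMT_comp h, brenME_comp h]
  | .tmu c => congrArg BCt.tmu (brenMC_comp h c)
end


theorem brenLT_upr_succ (ξ : ℕ → ℕ) (t : BTm) :
    brenLT (upr ξ) (brenLT Nat.succ t) = brenLT Nat.succ (brenLT ξ t) :=
  (brenLT_comp (ξ := upr ξ) (ζ := Nat.succ) (ρ := fun k => ξ k + 1) (fun _ => rfl) t).trans ((brenLT_comp (ξ := Nat.succ) (ζ := ξ) (ρ := fun k => ξ k + 1)
      (fun _ => rfl) t).symm)
theorem brenLE_upr_succ (ξ : ℕ → ℕ) (e : BCt) :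
    brenLE (upr ξ) (brenLE Nat.succ e) = brenLE Nat.succ (brenLE ξ e) :=
  (brenLE_comp (ξ := upr ξ) (ζ := Nat.succ) (ρ := fun k => ξ k + 1) (fun _ => rfl) e).trans ((brenLE_comp (ξ := Nat.succ) (ζ := ξ) (ρ := fun k => ξ k + 1)
      (fun _ => rfl) e).symm)
theorem brenMT_upr_succ (ξ : ℕ → ℕ) (t : BTm) :
    brenMT (upr ξ) (brenMT Nat.succ t) = brenMT Nat.succ (brenMT ξ t) :=
  (brenMT_comp (ξ := upr ξ) (ζ := Nat.succ) (ρ := fun k => ξ k + 1) (fun _ => rfl) t).trans ((brenMT_comp (ξ := Nat.succ) (ζ := ξ) (ρ := fun k => ξ k + 1)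
      (fun _ => rfl) t).symm)
theorem brenME_upr_succ (ξ : ℕ → ℕ) (e : BCt) :
    brenME (upr ξ) (brenME Nat.succ e) = brenME Nat.succ (brenME ξ e) :=
  (brenME_comp (ξ := upr ξ) (ζ := Nat.succ) (ρ := fun k => ξ k + 1) (fun _ => rfl) e).trans ((brenME_comp (ξ := Nat.succ) (ζ := ξ) (ρ := fun k => ξ k + 1)
      (fun _ => rfl) e).symm)

mutual
theorem brenLM_T : ∀ (t : BTm) (ξ ζ : ℕ → ℕ),
    brenLT ξ (brenMT ζ t) = brenMT ζ (brenLT ξ t)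
  | .var _, _, _ => rfl
  | .abs t, ξ, ζ => congrArg BTm.abs (brenLM_T t (upr ξ) ζ)
  | .mabs c, ξ, ζ => congrArg BTm.mabs (brenLM_C c ξ (upr ζ))
theorem brenLM_C : ∀ (c : BCm) (ξ ζ : ℕ → ℕ),
    brenLC ξ (brenMC ζ c) = brenMC ζ (brenLC ξ c)
  | .cut t e, ξ, ζ => by simp only [brenLC, brenMC, brenLM_T, brenLM_E]
theorem brenLM_E : ∀ (e : BCt) (ξ ζ : ℕ → ℕ),
    brenLE ξ (brenME ζ e) = brenME ζ (brenLE ξ e)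
  | .cvar _, _, _ => rfl
  | .cons t e, ξ, ζ => by simp only [brenLE, brenME, brenLM_T, brenLM_E]
  | .tmu c, ξ, ζ => congrArg BCt.tmu (brenLM_C c (upr ξ) ζ)
end

/-! #### Structural substitution vs renaming (λ̄μμ̃) -/

mutual
theorem bmsubT_brenM {σ : ℕ → BCt} {ζ : ℕ → ℕ} {τ : ℕ → BCt}
    (h : ∀ k, σ (ζ k) = τ k) :
    ∀ t, bmsubT σ (brenMT ζ t) = bmsubT τ t
  | .var _ => rfl
  | .abs t => congrArg BTm.abs
      (bmsubT_brenM (fun k => congrArg (brenLE Nat.succ) (h k)) t)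
  | .mabs c => congrArg BTm.mabs (bmsubC_brenM (σ := bupsM σ)
      (by
        intro k
        cases k with
        | zero => rfl
        | succ k => exact congrArg (brenME Nat.succ) (h k)) c)
theorem bmsubC_brenM {σ : ℕ → BCt} {ζ : ℕ → ℕ} {τ : ℕ → BCt}
    (h : ∀ k, σ (ζ k) = τ k) :
    ∀ c, bmsubC σ (brenMC ζ c) = bmsubC τ c
  | .cut t e => by simp only [bmsubC, brenMC, bmsubT_brenM h, bmsubE_brenM h]
theorem bmsubE_brenM {σ : ℕ → BCt} {ζ : ℕ → ℕ} {τ : ℕ → BCt}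
    (h : ∀ k, σ (ζ k) = τ k) :
    ∀ e, bmsubE σ (brenME ζ e) = bmsubE τ e
  | .cvar a => h a
  | .cons t e => by simp only [bmsubE, brenME, bmsubT_brenM h, bmsubE_brenM h]
  | .tmu c => congrArg BCt.tmu
      (bmsubC_brenM (fun k => congrArg (brenLE Nat.succ) (h k)) c)
end

mutual
theorem brenM_bmsubT {ξ : ℕ → ℕ} {σ τ : ℕ → BCt}
    (h : ∀ k, brenME ξ (σ k) = τ k) :
    ∀ t, brenMT ξ (bmsubT σ t) = bmsubT τ t
  | .var _ => rfl
  | .abs t => congrArg BTm.abs (brenM_bmsubT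
      (fun k => (brenLM_E (σ k) Nat.succ ξ).symm.trans (congrArg (brenLE Nat.succ) (h k))) t)
  | .mabs c => congrArg BTm.mabs (brenM_bmsubC
      (by
        intro k
        cases k with
        | zero => rfl
        | succ k =>
            exact (brenME_upr_succ ξ (σ k)).trans (congrArg (brenME Nat.succ) (h k))) c)
theorem brenM_bmsubC {ξ : ℕ → ℕ} {σ τ : ℕ → BCt}
    (h : ∀ k, brenME ξ (σ k) = τ k) :
    ∀ c, brenMC ξ (bmsubC σ c) = bmsubC τ c
  | .cut t e => by simp only [bmsubC, brenMC, brenM_bmsubT h, brenM_bmsubE h]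
theorem brenM_bmsubE {ξ : ℕ → ℕ} {σ τ : ℕ → BCt}
    (h : ∀ k, brenME ξ (σ k) = τ k) :
    ∀ e, brenME ξ (bmsubE σ e) = bmsubE τ e
  | .cvar a => h a
  | .cons t e => by simp only [bmsubE, brenME, brenM_bmsubT h, brenM_bmsubE h]
  | .tmu c => congrArg BCt.tmu (brenM_bmsubC
      (fun k => (brenLM_E (σ k) Nat.succ ξ).symm.trans (congrArg (brenLE Nat.succ) (h k))) c)
end

mutual
theorem brenL_bmsubT : ∀ (t : BTm) {ξ : ℕ → ℕ} {σ τ : ℕ → BCt},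
    (∀ k, brenLE ξ (σ k) = τ k) →
    brenLT ξ (bmsubT σ t) = bmsubT τ (brenLT ξ t)
  | .var _, _, _, _, _ => rfl
  | .abs t, ξ, σ, τ, h => congrArg BTm.abs (brenL_bmsubT t
      (fun k => by
        exact (brenLE_upr_succ ξ (σ k)).trans (congrArg (brenLE Nat.succ) (h k))))
  | .mabs c, ξ, σ, τ, h => congrArg BTm.mabs (brenL_bmsubC c
      (by
        intro k
        cases k with
        | zero => rfl
        | succ k =>
            exact (brenLM_E (σ k) ξ Nat.succ).trans (congrArg (brenME Nat.succ) (h k))))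
theorem brenL_bmsubC : ∀ (c : BCm) {ξ : ℕ → ℕ} {σ τ : ℕ → BCt},
    (∀ k, brenLE ξ (σ k) = τ k) →
    brenLC ξ (bmsubC σ c) = bmsubC τ (brenLC ξ c)
  | .cut t e, ξ, σ, τ, h => by
      simp only [bmsubC, brenLC, brenL_bmsubT t h, brenL_bmsubE e h]
theorem brenL_bmsubE : ∀ (e : BCt) {ξ : ℕ → ℕ} {σ τ : ℕ → BCt},
    (∀ k, brenLE ξ (σ k) = τ k) →
    brenLE ξ (bmsubE σ e) = bmsubE τ (brenLE ξ e)
  | .cvar a, _, _, _, h => h a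
  | .cons t e, ξ, σ, τ, h => by
      simp only [bmsubE, brenLE, brenL_bmsubT t h, brenL_bmsubE e h]
  | .tmu c, ξ, σ, τ, h => congrArg BCt.tmu (brenL_bmsubC c
      (fun k => by
        exact (brenLE_upr_succ ξ (σ k)).trans (congrArg (brenLE Nat.succ) (h k))))
end

mutual
theorem bmsubT_id : ∀ (t : BTm) {σ : ℕ → BCt}, (∀ k, σ k = .cvar k) →
    bmsubT σ t = t
  | .var _, _, _ => rfl
  | .abs t, σ, h => congrArg BTm.abs
      (bmsubT_id t (fun k => by rw [h k]; rfl))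
  | .mabs c, σ, h => congrArg BTm.mabs
      (bmsubC_id c (by
        intro k
        cases k with
        | zero => rfl
        | succ k => show brenME Nat.succ (σ k) = _; rw [h k]; rfl))
theorem bmsubC_id : ∀ (c : BCm) {σ : ℕ → BCt}, (∀ k, σ k = .cvar k) →
    bmsubC σ c = c
  | .cut t e, σ, h => by
      simp only [bmsubC, bmsubT_id t h, bmsubE_id e h]
theorem bmsubE_id : ∀ (e : BCt) {σ : ℕ → BCt}, (∀ k, σ k = .cvar k) →
    bmsubE σ e = e
  | .cvar a, _, h => h a
  | .cons t e, σ, h => by simp only [bmsubE, bmsubT_id t h, bmsubE_id e h]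
  | .tmu c, σ, h => congrArg BCt.tmu
      (bmsubC_id c (fun k => by rw [h k]; rfl))
end

/-! #### λ-substitution vs renaming (λ̄μμ̃) -/

mutual
theorem blsubT_brenL : ∀ (t : BTm) {σ : ℕ → BTm} {ζ : ℕ → ℕ} {τ : ℕ → BTm},
    (∀ k, σ (ζ k) = τ k) → blsubT σ (brenLT ζ t) = blsubT τ t
  | .var x, _, _, _, h => h x
  | .abs t, σ, ζ, τ, h => congrArg BTm.abs (blsubT_brenL t
      (by
        intro k
        cases k with
        | zero => rfl
        | succ k => exact congrArg (brenLT Nat.succ) (h k)))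
  | .mabs c, σ, ζ, τ, h => congrArg BTm.mabs (blsubC_brenL c
      (fun k => congrArg (brenMT Nat.succ) (h k)))
theorem blsubC_brenL : ∀ (c : BCm) {σ : ℕ → BTm} {ζ : ℕ → ℕ} {τ : ℕ → BTm},
    (∀ k, σ (ζ k) = τ k) → blsubC σ (brenLC ζ c) = blsubC τ c
  | .cut t e, _, _, _, h => by
      simp only [blsubC, brenLC, blsubT_brenL t h, blsubE_brenL e h]
theorem blsubE_brenL : ∀ (e : BCt) {σ : ℕ → BTm} {ζ : ℕ → ℕ} {τ : ℕ → BTm},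
    (∀ k, σ (ζ k) = τ k) → blsubE σ (brenLE ζ e) = blsubE τ e
  | .cvar a, _, _, _, _ => rfl
  | .cons t e, _, _, _, h => by
      simp only [blsubE, brenLE, blsubT_brenL t h, blsubE_brenL e h]
  | .tmu c, σ, ζ, τ, h => congrArg BCt.tmu (blsubC_brenL c
      (by
        intro k
        cases k with
        | zero => rfl
        | succ k => exact congrArg (brenLT Nat.succ) (h k)))
end

mutual
theorem brenL_blsubT : ∀ (t : BTm) {ξ : ℕ → ℕ} {σ τ : ℕ → BTm},
    (∀ k, brenLT ξ (σ k) = τ k) → brenLT ξ (blsubT σ t) = blsubT τ t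
  | .var x, _, _, _, h => h x
  | .abs t, ξ, σ, τ, h => congrArg BTm.abs (brenL_blsubT t
      (by
        intro k
        cases k with
        | zero => rfl
        | succ k => exact (brenLT_upr_succ ξ (σ k)).trans (congrArg (brenLT Nat.succ) (h k))))
  | .mabs c, ξ, σ, τ, h => congrArg BTm.mabs (brenL_blsubC c
      (fun k => (brenLM_T (σ k) ξ Nat.succ).trans (congrArg (brenMT Nat.succ) (h k))))
theorem brenL_blsubC : ∀ (c : BCm) {ξ : ℕ → ℕ} {σ τ : ℕ → BTm},
    (∀ k, brenLT ξ (σ k) = τ k) → brenLC ξ (blsubC σ c) = blsubC τ c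
  | .cut t e, _, _, _, h => by
      simp only [blsubC, brenLC, brenL_blsubT t h, brenL_blsubE e h]
theorem brenL_blsubE : ∀ (e : BCt) {ξ : ℕ → ℕ} {σ τ : ℕ → BTm},
    (∀ k, brenLT ξ (σ k) = τ k) → brenLE ξ (blsubE σ e) = blsubE τ e
  | .cvar a, _, _, _, _ => rfl
  | .cons t e, _, _, _, h => by
      simp only [blsubE, brenLE, brenL_blsubT t h, brenL_blsubE e h]
  | .tmu c, ξ, σ, τ, h => congrArg BCt.tmu (brenL_blsubC c
      (by
        intro k
        cases k with
        | zero => rfl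
        | succ k => exact (brenLT_upr_succ ξ (σ k)).trans (congrArg (brenLT Nat.succ) (h k))))
end

mutual
theorem brenM_blsubT : ∀ (t : BTm) {ξ : ℕ → ℕ} {σ τ : ℕ → BTm},
    (∀ k, brenMT ξ (σ k) = τ k) → brenMT ξ (blsubT σ t) = blsubT τ (brenMT ξ t)
  | .var x, _, _, _, h => h x
  | .abs t, ξ, σ, τ, h => congrArg BTm.abs (brenM_blsubT t
      (by
        intro k
        cases k with
        | zero => rfl
        | succ k => exact (brenLM_T (σ k) Nat.succ ξ).symm.trans (congrArg (brenLT Nat.succ) (h k))))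
  | .mabs c, ξ, σ, τ, h => congrArg BTm.mabs (brenM_blsubC c
      (fun k => (brenMT_upr_succ ξ (σ k)).trans (congrArg (brenMT Nat.succ) (h k))))
theorem brenM_blsubC : ∀ (c : BCm) {ξ : ℕ → ℕ} {σ τ : ℕ → BTm},
    (∀ k, brenMT ξ (σ k) = τ k) → brenMC ξ (blsubC σ c) = blsubC τ (brenMC ξ c)
  | .cut t e, _, _, _, h => by
      simp only [blsubC, brenMC, brenM_blsubT t h, brenM_blsubE e h]
theorem brenM_blsubE : ∀ (e : BCt) {ξ : ℕ → ℕ} {σ τ : ℕ → BTm},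
    (∀ k, brenMT ξ (σ k) = τ k) → brenME ξ (blsubE σ e) = blsubE τ (brenME ξ e)
  | .cvar a, _, _, _, _ => rfl
  | .cons t e, _, _, _, h => by
      simp only [blsubE, brenME, brenM_blsubT t h, brenM_blsubE e h]
  | .tmu c, ξ, σ, τ, h => congrArg BCt.tmu (brenM_blsubC c
      (by
        intro k
        cases k with
        | zero => rfl
        | succ k => exact (brenLM_T (σ k) Nat.succ ξ).symm.trans (congrArg (brenLT Nat.succ) (h k))))
end

/-! #### Occurrence counting vs renaming -/

theorem upr_iff {ζ : ℕ → ℕ} {b a : ℕ} (h : ∀ k, ζ k = b ↔ k = a) :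
    ∀ k, upr ζ k = b + 1 ↔ k = a + 1
  | 0 => by simp [upr]
  | k+1 => by simp [upr, h k]

mutual
theorem bcntM_brenM : ∀ (t : BTm) {ζ : ℕ → ℕ} {b a : ℕ},
    (∀ k, ζ k = b ↔ k = a) → bcntMT b (brenMT ζ t) = bcntMT a t
  | .var _, _, _, _, _ => rfl
  | .abs t, _, _, _, h => by
      simp only [brenMT, bcntMT]; exact bcntM_brenM t h
  | .mabs c, _, _, _, h => by
      simp only [brenMT, bcntMT]; exact bcntM_brenMC c (upr_iff h)
theorem bcntM_brenMC : ∀ (c : BCm) {ζ : ℕ → ℕ} {b a : ℕ},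
    (∀ k, ζ k = b ↔ k = a) → bcntMC b (brenMC ζ c) = bcntMC a c
  | .cut t e, _, _, _, h => by
      simp only [brenMC, bcntMC, bcntM_brenM t h, bcntM_brenME e h]
theorem bcntM_brenME : ∀ (e : BCt) {ζ : ℕ → ℕ} {b a : ℕ},
    (∀ k, ζ k = b ↔ k = a) → bcntME b (brenME ζ e) = bcntME a e
  | .cvar x, _, _, _, h => by simp only [brenME, bcntME, h x]
  | .cons t e, _, _, _, h => by
      simp only [brenME, bcntME, bcntM_brenM t h, bcntM_brenME e h]
  | .tmu c, _, _, _, h => by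
      simp only [brenME, bcntME]; exact bcntM_brenMC c h
end

mutual
theorem bcntM_brenL : ∀ (t : BTm) (a : ℕ) (ξ : ℕ → ℕ),
    bcntMT a (brenLT ξ t) = bcntMT a t
  | .var _, _, _ => rfl
  | .abs t, a, ξ => by simp only [brenLT, bcntMT]; exact bcntM_brenL t a _
  | .mabs c, a, ξ => by simp only [brenLT, bcntMT]; exact bcntM_brenLC c _ _
theorem bcntM_brenLC : ∀ (c : BCm) (a : ℕ) (ξ : ℕ → ℕ),
    bcntMC a (brenLC ξ c) = bcntMC a c
  | .cut t e, a, ξ => by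
      simp only [brenLC, bcntMC, bcntM_brenL t a ξ, bcntM_brenLE e a ξ]
theorem bcntM_brenLE : ∀ (e : BCt) (a : ℕ) (ξ : ℕ → ℕ),
    bcntME a (brenLE ξ e) = bcntME a e
  | .cvar _, _, _ => rfl
  | .cons t e, a, ξ => by
      simp only [brenLE, bcntME, bcntM_brenL t a ξ, bcntM_brenLE e a ξ]
  | .tmu c, a, ξ => by simp only [brenLE, bcntME]; exact bcntM_brenLC c _ _
end

mutual
theorem bcntL_brenL : ∀ (t : BTm) {ζ : ℕ → ℕ} {b a : ℕ},
    (∀ k, ζ k = b ↔ k = a) → bcntLT b (brenLT ζ t) = bcntLT a t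
  | .var x, _, _, _, h => by simp only [brenLT, bcntLT, h x]
  | .abs t, _, _, _, h => by
      simp only [brenLT, bcntLT]; exact bcntL_brenL t (upr_iff h)
  | .mabs c, _, _, _, h => by
      simp only [brenLT, bcntLT]; exact bcntL_brenLC c h
theorem bcntL_brenLC : ∀ (c : BCm) {ζ : ℕ → ℕ} {b a : ℕ},
    (∀ k, ζ k = b ↔ k = a) → bcntLC b (brenLC ζ c) = bcntLC a c
  | .cut t e, _, _, _, h => by
      simp only [brenLC, bcntLC, bcntL_brenL t h, bcntL_brenLE e h]
theorem bcntL_brenLE : ∀ (e : BCt) {ζ : ℕ → ℕ} {b a : ℕ},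
    (∀ k, ζ k = b ↔ k = a) → bcntLE b (brenLE ζ e) = bcntLE a e
  | .cvar _, _, _, _, _ => rfl
  | .cons t e, _, _, _, h => by
      simp only [brenLE, bcntLE, bcntL_brenL t h, bcntL_brenLE e h]
  | .tmu c, _, _, _, h => by
      simp only [brenLE, bcntLE]; exact bcntL_brenLC c (upr_iff h)
end

mutual
theorem bcntL_brenM : ∀ (t : BTm) (x : ℕ) (ξ : ℕ → ℕ),
    bcntLT x (brenMT ξ t) = bcntLT x t
  | .var _, _, _ => rfl
  | .abs t, x, ξ => by simp only [brenMT, bcntLT]; exact bcntL_brenM t _ _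
  | .mabs c, x, ξ => by simp only [brenMT, bcntLT]; exact bcntL_brenMC c _ _
theorem bcntL_brenMC : ∀ (c : BCm) (x : ℕ) (ξ : ℕ → ℕ),
    bcntLC x (brenMC ξ c) = bcntLC x c
  | .cut t e, x, ξ => by
      simp only [brenMC, bcntLC, bcntL_brenM t x ξ, bcntL_brenME e x ξ]
theorem bcntL_brenME : ∀ (e : BCt) (x : ℕ) (ξ : ℕ → ℕ),
    bcntLE x (brenME ξ e) = bcntLE x e
  | .cvar _, _, _ => rfl
  | .cons t e, x, ξ => by
      simp only [brenME, bcntLE, bcntL_brenM t x ξ, bcntL_brenME e x ξ]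
  | .tmu c, x, ξ => by simp only [brenME, bcntLE]; exact bcntL_brenMC c _ _
end

/-! #### The translation commutes with renaming -/

mutual
theorem dagT_renL : ∀ (t : Tm) (ξ : ℕ → ℕ),
    dagT (renLT ξ t) = brenLT ξ (dagT t)
  | .var _, _ => rfl
  | .abs t, ξ => congrArg BTm.abs (dagT_renL t (upr ξ))
  | .app u v, ξ => by
      simp only [renLT, dagT, brenLT, brenLC, brenLE, dagT_renL u ξ,
        dagT_renL v ξ, brenLM_T, brenLT_upr_succ, upr]
  | .mabs c, ξ => congrArg BTm.mabs (dagC_renL c ξ)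
theorem dagC_renL : ∀ (c : Cm) (ξ : ℕ → ℕ),
    dagC (renLC ξ c) = brenLC ξ (dagC c)
  | .cmd a t, ξ => by
      simp only [renLC, dagC, brenLC, brenLE, dagT_renL t ξ]
end

mutual
theorem dagT_renM : ∀ (t : Tm) (ξ : ℕ → ℕ),
    dagT (renMT ξ t) = brenMT ξ (dagT t)
  | .var _, _ => rfl
  | .abs t, ξ => congrArg BTm.abs (dagT_renM t ξ)
  | .app u v, ξ => by
      simp only [renMT, dagT, brenMT, brenMC, brenME, dagT_renM u ξ,
        dagT_renM v ξ, ← brenLM_T, brenMT_upr_succ, upr]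
  | .mabs c, ξ => congrArg BTm.mabs (dagC_renM c (upr ξ))
theorem dagC_renM : ∀ (c : Cm) (ξ : ℕ → ℕ),
    dagC (renMC ξ c) = brenMC ξ (dagC c)
  | .cmd a t, ξ => by
      simp only [renMC, dagC, brenMC, brenME, dagT_renM t ξ]
end

/-! #### Linear λ̄μμ̃-reduction is closed under renamings -/

theorem upr_zero_iff (ξ : ℕ → ℕ) : ∀ k, upr ξ k = 0 ↔ k = 0
  | 0 => by simp [upr]
  | k+1 => by simp [upr]

theorem rootT_brenM (ξ : ℕ → ℕ) {t t' : BTm} (h : BRootT t t') :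
    BRootT (brenMT ξ t) (brenMT ξ t') := by
  cases h with
  | theta _ =>
      simpa [brenMT, brenMC, brenME, brenMT_upr_succ, upr]
        using BRootT.theta (brenMT ξ t')

theorem rootT_brenL (ξ : ℕ → ℕ) {t t' : BTm} (h : BRootT t t') :
    BRootT (brenLT ξ t) (brenLT ξ t') := by
  cases h with
  | theta _ =>
      simpa [brenLT, brenLC, brenLE, brenLM_T]
        using BRootT.theta (brenLT ξ t')

theorem rootClin_brenM (ξ : ℕ → ℕ) {c c' : BCm} (h : BRootClin c c') :
    BRootClin (brenMC ξ c) (brenMC ξ c') := by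
  cases h with
  | beta u t e =>
      simpa [brenMC, brenMT, brenME, brenLM_E]
        using BRootClin.beta (brenMT ξ u) (brenMT ξ t) (brenME ξ e)
  | mu c e hside =>
      have h2 : brenMC ξ (bmsubC (bsub0M e) c)
          = bmsubC (bsub0M (brenME ξ e)) (brenMC (upr ξ) c) :=
        (brenM_bmsubC (τ := fun k => brenME ξ (bsub0M e k)) (fun _ => rfl) c).trans
          ((bmsubC_brenM (σ := bsub0M (brenME ξ e)) (ζ := upr ξ)
            (τ := fun k => brenME ξ (bsub0M e k))
            (by
              intro k
              cases k with
              | zero => rfl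
              | succ k => simp [bsub0M, brenME, upr]) c).symm)
      have hside' : (∃ a, brenME ξ e = BCt.cvar a)
          ∨ bcntMC 0 (brenMC (upr ξ) c) = 1 := by
        rcases hside with ⟨b, rfl⟩ | hcnt
        · exact Or.inl ⟨ξ b, by simp [brenME]⟩
        · exact Or.inr ((bcntM_brenMC c (upr_zero_iff ξ)).trans hcnt)
      have := BRootClin.mu (brenMC (upr ξ) c) (brenME ξ e) hside'
      simpa [brenMC, brenMT, h2] using this
  | mutilde t c hside =>
      have h2 : brenMC ξ (blsubC (bsub0L t) c)
          = blsubC (bsub0L (brenMT ξ t)) (brenMC ξ c) :=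
        brenM_blsubC c (τ := bsub0L (brenMT ξ t))
          (by
            intro k
            cases k with
            | zero => rfl
            | succ k => simp [bsub0L, brenMT])
      have hside' : (∃ x, brenMT ξ t = BTm.var x)
          ∨ bcntLC 0 (brenMC ξ c) = 1 := by
        rcases hside with ⟨x, rfl⟩ | hcnt
        · exact Or.inl ⟨x, by simp [brenMT]⟩
        · exact Or.inr ((bcntL_brenMC c 0 ξ).trans hcnt)
      have := BRootClin.mutilde (brenMT ξ t) (brenMC ξ c) hside'
      simpa [brenMC, brenME, h2] using this

theorem rootClin_brenL (ξ : ℕ → ℕ) {c c' : BCm} (h : BRootClin c c') :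
    BRootClin (brenLC ξ c) (brenLC ξ c') := by
  cases h with
  | beta u t e =>
      simpa [brenLC, brenLT, brenLE, brenLE_upr_succ]
        using BRootClin.beta (brenLT (upr ξ) u) (brenLT ξ t) (brenLE ξ e)
  | mu c e hside =>
      have h2 : brenLC ξ (bmsubC (bsub0M e) c)
          = bmsubC (bsub0M (brenLE ξ e)) (brenLC ξ c) :=
        (brenL_bmsubC c (τ := fun k => brenLE ξ (bsub0M e k)) (fun _ => rfl)).trans
          (bmsubC_ext
            (by
              intro k
              cases k with
              | zero => rfl
              | succ k => simp [bsub0M, brenLE]) (brenLC ξ c))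
      have hside' : (∃ a, brenLE ξ e = BCt.cvar a)
          ∨ bcntMC 0 (brenLC ξ c) = 1 := by
        rcases hside with ⟨b, rfl⟩ | hcnt
        · exact Or.inl ⟨b, by simp [brenLE]⟩
        · exact Or.inr ((bcntM_brenLC c 0 ξ).trans hcnt)
      have := BRootClin.mu (brenLC ξ c) (brenLE ξ e) hside'
      simpa [brenLC, brenLT, h2] using this
  | mutilde t c hside =>
      have h2 : brenLC ξ (blsubC (bsub0L t) c)
          = blsubC (bsub0L (brenLT ξ t)) (brenLC (upr ξ) c) :=
        (brenL_blsubC c (τ := fun k => brenLT ξ (bsub0L t k)) (fun _ => rfl)).trans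
          ((blsubC_brenL c (σ := bsub0L (brenLT ξ t)) (ζ := upr ξ)
            (τ := fun k => brenLT ξ (bsub0L t k))
            (by
              intro k
              cases k with
              | zero => rfl
              | succ k => simp [bsub0L, brenLT, upr])).symm)
      have hside' : (∃ x, brenLT ξ t = BTm.var x)
          ∨ bcntLC 0 (brenLC (upr ξ) c) = 1 := by
        rcases hside with ⟨x, rfl⟩ | hcnt
        · exact Or.inl ⟨ξ x, by simp [brenLT]⟩
        · exact Or.inr ((bcntL_brenLC c (upr_zero_iff ξ)).trans hcnt)
      have := BRootClin.mutilde (brenLT ξ t) (brenLC (upr ξ) c) hside'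
      simpa [brenLC, brenLT, brenLE, h2] using this

mutual
theorem lbstepT_brenM : ∀ {t t' : BTm}, LBStepT t t' → ∀ (ξ : ℕ → ℕ),
    LBStepT (brenMT ξ t) (brenMT ξ t')
  | _, _, .root h, ξ => .root (rootT_brenM ξ h)
  | _, _, .absC h, ξ => .absC (lbstepT_brenM h ξ)
  | _, _, .mabsC h, ξ => .mabsC (lbstepC_brenM h (upr ξ))
theorem lbstepC_brenM : ∀ {c c' : BCm}, LBStepC c c' → ∀ (ξ : ℕ → ℕ),
    LBStepC (brenMC ξ c) (brenMC ξ c')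
  | _, _, .root h, ξ => .root (rootClin_brenM ξ h)
  | _, _, .cutL e h, ξ => .cutL _ (lbstepT_brenM h ξ)
  | _, _, .cutR t h, ξ => .cutR _ (lbstepE_brenM h ξ)
theorem lbstepE_brenM : ∀ {e e' : BCt}, LBStepE e e' → ∀ (ξ : ℕ → ℕ),
    LBStepE (brenME ξ e) (brenME ξ e')
  | _, _, .consL e h, ξ => .consL _ (lbstepT_brenM h ξ)
  | _, _, .consR t h, ξ => .consR _ (lbstepE_brenM h ξ)
  | _, _, .tmuC h, ξ => .tmuC (lbstepC_brenM h ξ)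
end

mutual
theorem lbstepT_brenL : ∀ {t t' : BTm}, LBStepT t t' → ∀ (ξ : ℕ → ℕ),
    LBStepT (brenLT ξ t) (brenLT ξ t')
  | _, _, .root h, ξ => .root (rootT_brenL ξ h)
  | _, _, .absC h, ξ => .absC (lbstepT_brenL h (upr ξ))
  | _, _, .mabsC h, ξ => .mabsC (lbstepC_brenL h ξ)
theorem lbstepC_brenL : ∀ {c c' : BCm}, LBStepC c c' → ∀ (ξ : ℕ → ℕ),
    LBStepC (brenLC ξ c) (brenLC ξ c')
  | _, _, .root h, ξ => .root (rootClin_brenL ξ h)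
  | _, _, .cutL e h, ξ => .cutL _ (lbstepT_brenL h ξ)
  | _, _, .cutR t h, ξ => .cutR _ (lbstepE_brenL h ξ)
theorem lbstepE_brenL : ∀ {e e' : BCt}, LBStepE e e' → ∀ (ξ : ℕ → ℕ),
    LBStepE (brenLE ξ e) (brenLE ξ e')
  | _, _, .consL e h, ξ => .consL _ (lbstepT_brenL h ξ)
  | _, _, .consR t h, ξ => .consR _ (lbstepE_brenL h ξ)
  | _, _, .tmuC h, ξ => .tmuC (lbstepC_brenL h (upr ξ))
end

/-! #### Star congruences -/

theorem star_abs {t t' : BTm} (h : Star LBStepT t t') :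
    Star LBStepT (.abs t) (.abs t') :=
  Relation.ReflTransGen.lift BTm.abs (fun _ _ => JT.absC) _ _ h
theorem star_mabs {c c' : BCm} (h : Star LBStepC c c') :
    Star LBStepT (.mabs c) (.mabs c') :=
  Relation.ReflTransGen.lift BTm.mabs (fun _ _ => JT.mabsC) _ _ h
theorem star_cutL (e : BCt) {t t' : BTm} (h : Star LBStepT t t') :
    Star LBStepC (.cut t e) (.cut t' e) :=
  Relation.ReflTransGen.lift (fun t => BCm.cut t e) (fun _ _ => JC.cutL e) _ _ h
theorem star_cutR (t : BTm) {e e' : BCt} (h : Star LBStepE e e') :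
    Star LBStepC (.cut t e) (.cut t e') :=
  Relation.ReflTransGen.lift (BCm.cut t) (fun _ _ => JC.cutR t) _ _ h
theorem star_tmu {c c' : BCm} (h : Star LBStepC c c') :
    Star LBStepE (.tmu c) (.tmu c') :=
  Relation.ReflTransGen.lift BCt.tmu (fun _ _ => JE.tmuC) _ _ h
theorem star_brenM (ξ : ℕ → ℕ) {t t' : BTm} (h : Star LBStepT t t') :
    Star LBStepT (brenMT ξ t) (brenMT ξ t') :=
  Relation.ReflTransGen.lift (brenMT ξ) (fun _ _ h => lbstepT_brenM h ξ) _ _ h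
theorem star_brenL (ξ : ℕ → ℕ) {t t' : BTm} (h : Star LBStepT t t') :
    Star LBStepT (brenLT ξ t) (brenLT ξ t') :=
  Relation.ReflTransGen.lift (brenLT ξ) (fun _ _ h => lbstepT_brenL h ξ) _ _ h

/-! #### The main simulation -/

/-- The λ̄μμ̃-context `μ̃y.⟨U | y · α⟩`. -/
def BE (a : ℕ) (U : BTm) : BCt :=
  .tmu (.cut (brenLT Nat.succ U) (.cons (.var 0) (.cvar a)))

theorem brenLE_BE (ξ : ℕ → ℕ) (a : ℕ) (U : BTm) :
    brenLE ξ (BE a U) = BE a (brenLT ξ U) := by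
  simp [BE, brenLE, brenLC, brenLT, brenLT_upr_succ, upr]

theorem brenME_BE (ξ : ℕ → ℕ) (a : ℕ) (U : BTm) :
    brenME ξ (BE a U) = BE (ξ a) (brenMT ξ U) := by
  simp [BE, brenME, brenMC, brenMT, ← brenLM_T]

mutual
theorem mainT : ∀ (t : Tm) (a : ℕ) (u : Tm),
    Star LBStepT (dagT (msubT (sub1M a (Ct.push a u)) t))
      (bmsubT (bsub1M a (BE a (dagT u))) (dagT t))
  | .var _, _, _ => Relation.ReflTransGen.refl
  | .abs t, a, u => by
      have e1 : dagT (msubT (sub1M a (Ct.push a u)) (.abs t))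
          = .abs (dagT (msubT (sub1M a (Ct.push a (renLT Nat.succ u))) t)) := by
        show BTm.abs (dagT (msubT (fun k => renLE Nat.succ (sub1M a (Ct.push a u) k)) t)) = _
        rw [msubT_ext (σ' := sub1M a (Ct.push a (renLT Nat.succ u)))
          (fun k => by by_cases hk : k = a <;> simp [sub1M, hk, renLE]) t]
      have e2 : bmsubT (bsub1M a (BE a (dagT u))) (dagT (.abs t))
          = .abs (bmsubT (bsub1M a (BE a (dagT (renLT Nat.succ u)))) (dagT t)) := by
        show BTm.abs (bmsubT (fun k => brenLE Nat.succ (bsub1M a (BE a (dagT u)) k)) (dagT t)) = _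
        rw [bmsubT_ext (σ' := bsub1M a (BE a (dagT (renLT Nat.succ u))))
          (fun k => by
            by_cases hk : k = a
            · simp [bsub1M, hk, brenLE_BE, dagT_renL]
            · simp [bsub1M, hk, brenLE]) (dagT t)]
      rw [e1, e2]
      exact star_abs (mainT t a (renLT Nat.succ u))
  | .app t v, a, u => by
      have E1 : ∀ s : Tm,
          bmsubT (bupsM (bsub1M a (BE a (dagT u)))) (brenMT Nat.succ (dagT s))
          = brenMT Nat.succ (bmsubT (bsub1M a (BE a (dagT u))) (dagT s)) := fun s =>
        (bmsubT_brenM (τ := fun k => brenME Nat.succ (bsub1M a (BE a (dagT u)) k))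
          (fun _ => rfl) (dagT s)).trans
          ((brenM_bmsubT (σ := bsub1M a (BE a (dagT u)))
            (τ := fun k => brenME Nat.succ (bsub1M a (BE a (dagT u)) k))
            (fun _ => rfl) (dagT s)).symm)
      have E2 : bmsubT (fun k => brenLE Nat.succ (bupsM (bsub1M a (BE a (dagT u))) k))
            (brenLT Nat.succ (brenMT Nat.succ (dagT t)))
          = brenLT Nat.succ (brenMT Nat.succ (bmsubT (bsub1M a (BE a (dagT u))) (dagT t))) :=
        ((brenL_bmsubT (brenMT Nat.succ (dagT t))
          (σ := bupsM (bsub1M a (BE a (dagT u))))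
          (τ := fun k => brenLE Nat.succ (bupsM (bsub1M a (BE a (dagT u))) k))
          (fun _ => rfl)).symm).trans (congrArg (brenLT Nat.succ) (E1 t))
      have e2 : bmsubT (bsub1M a (BE a (dagT u))) (dagT (.app t v))
          = .mabs (.cut
              (brenMT Nat.succ (bmsubT (bsub1M a (BE a (dagT u))) (dagT v)))
              (.tmu (.cut
                (brenLT Nat.succ (brenMT Nat.succ
                  (bmsubT (bsub1M a (BE a (dagT u))) (dagT t))))
                (.cons (.var 0) (.cvar 0))))) := by
        show BTm.mabs (bmsubC (bupsM (bsub1M a (BE a (dagT u))))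
            (.cut (brenMT Nat.succ (dagT v))
              (.tmu (.cut (brenLT Nat.succ (brenMT Nat.succ (dagT t)))
                (.cons (.var 0) (.cvar 0)))))) = _
        have hD0 : brenLE Nat.succ (bupsM (bsub1M a (BE a (dagT u))) 0)
            = BCt.cvar 0 := by simp [bupsM, brenLE]
        simp only [bmsubC, bmsubE, bmsubT, hD0]
        rw [E1 v, E2]
      rw [e2]
      exact star_mabs (Relation.ReflTransGen.trans
        (star_cutL _ (star_brenM Nat.succ (mainT v a u)))
        (star_cutR _ (star_tmu (star_cutL _
          (star_brenL Nat.succ (star_brenM Nat.succ (mainT t a u)))))))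
  | .mabs c, a, u => by
      have e1 : dagT (msubT (sub1M a (Ct.push a u)) (.mabs c))
          = .mabs (dagC (msubC (sub1M (a+1) (Ct.push (a+1) (renMT Nat.succ u))) c)) := by
        show BTm.mabs (dagC (msubC (upsM (sub1M a (Ct.push a u))) c)) = _
        rw [msubC_ext (σ' := sub1M (a+1) (Ct.push (a+1) (renMT Nat.succ u)))
          (fun k => by
            cases k with
            | zero => simp [upsM, sub1M]
            | succ k => by_cases hk : k = a <;> simp [upsM, sub1M, hk, renME]) c]
      have e2 : bmsubT (bsub1M a (BE a (dagT u))) (dagT (.mabs c))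
          = .mabs (bmsubC (bsub1M (a+1) (BE (a+1) (dagT (renMT Nat.succ u)))) (dagC c)) := by
        show BTm.mabs (bmsubC (bupsM (bsub1M a (BE a (dagT u)))) (dagC c)) = _
        rw [bmsubC_ext (σ' := bsub1M (a+1) (BE (a+1) (dagT (renMT Nat.succ u))))
          (fun k => by
            cases k with
            | zero => simp [bupsM, bsub1M]
            | succ k =>
                by_cases hk : k = a
                · simp [bupsM, bsub1M, hk, brenME_BE, dagT_renM]
                · simp [bupsM, bsub1M, hk, brenME]) (dagC c)]
      rw [e1, e2]
      exact star_mabs (mainC c (a+1) (renMT Nat.succ u))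
theorem mainC : ∀ (c : Cm) (a : ℕ) (u : Tm),
    Star LBStepC (dagC (msubC (sub1M a (Ct.push a u)) c))
      (bmsubC (bsub1M a (BE a (dagT u))) (dagC c))
  | .cmd b t, a, u => by
      by_cases hb : b = a
      · subst hb
        have e1 : dagC (msubC (sub1M b (Ct.push b u)) (.cmd b t))
            = .cut (.mabs (.cut
                (brenMT Nat.succ (dagT (msubT (sub1M b (Ct.push b u)) t)))
                (.tmu (.cut (brenLT Nat.succ (brenMT Nat.succ (dagT u)))
                  (.cons (.var 0) (.cvar 0)))))) (.cvar b) := by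
          show dagC (fill (sub1M b (Ct.push b u) b)
              (msubT (sub1M b (Ct.push b u)) t)) = _
          simp [sub1M, fill, dagC, dagT]
        rw [e1]
        have hA : bmsubT (bsub0M (BCt.cvar b))
            (brenMT Nat.succ (bmsubT (bsub1M b (BE b (dagT u))) (dagT t)))
            = bmsubT (bsub1M b (BE b (dagT u))) (dagT t) :=
          (bmsubT_brenM (σ := bsub0M (BCt.cvar b)) (ζ := Nat.succ)
            (τ := fun k => BCt.cvar k) (fun _ => rfl) _).trans
            (bmsubT_id _ (fun _ => rfl))
        have hB : bmsubT (fun k => brenLE Nat.succ (bsub0M (BCt.cvar b) k))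
            (brenLT Nat.succ (brenMT Nat.succ (dagT u)))
            = brenLT Nat.succ (dagT u) :=
          ((brenL_bmsubT (brenMT Nat.succ (dagT u)) (σ := bsub0M (BCt.cvar b))
            (τ := fun k => brenLE Nat.succ (bsub0M (BCt.cvar b) k))
            (fun _ => rfl)).symm).trans
            (congrArg (brenLT Nat.succ)
              ((bmsubT_brenM (σ := bsub0M (BCt.cvar b)) (ζ := Nat.succ)
                (τ := fun k => BCt.cvar k) (fun _ => rfl)
                (dagT u)).trans (bmsubT_id _ (fun _ => rfl))))
        have hC : bsub1M b (BE b (dagT u)) b = BE b (dagT u) := by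
          simp [bsub1M]
        have hD : brenLE Nat.succ (bsub0M (BCt.cvar b) 0) = BCt.cvar b := by
          simp [bsub0M, brenLE]
        have heq : bmsubC (bsub0M (BCt.cvar b))
            (.cut (brenMT Nat.succ (bmsubT (bsub1M b (BE b (dagT u))) (dagT t)))
              (.tmu (.cut (brenLT Nat.succ (brenMT Nat.succ (dagT u)))
                (.cons (.var 0) (.cvar 0)))))
            = bmsubC (bsub1M b (BE b (dagT u))) (dagC (.cmd b t)) := by
          simp only [bmsubC, bmsubE, bmsubT, dagC, hA, hB, hC, hD]
          rfl
        refine Relation.ReflTransGen.trans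
          (star_cutL _ (star_mabs (star_cutL _
            (star_brenM Nat.succ (mainT t b u))))) ?_
        refine Relation.ReflTransGen.single ?_
        rw [← heq]
        exact JC.root (BRootClin.mu _ _ (Or.inl ⟨b, rfl⟩))
      · have e1 : dagC (msubC (sub1M a (Ct.push a u)) (.cmd b t))
            = .cut (dagT (msubT (sub1M a (Ct.push a u)) t)) (.cvar b) := by
          show dagC (fill (sub1M a (Ct.push a u) b)
              (msubT (sub1M a (Ct.push a u)) t)) = _
          simp [sub1M, hb, fill, dagC]
        have e2 : bmsubC (bsub1M a (BE a (dagT u))) (dagC (.cmd b t))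
            = .cut (bmsubT (bsub1M a (BE a (dagT u))) (dagT t)) (.cvar b) := by
          show BCm.cut (bmsubT (bsub1M a (BE a (dagT u))) (dagT t))
              (bmsubE (bsub1M a (BE a (dagT u))) (.cvar b)) = _
          simp [bmsubE, bsub1M, hb]
        rw [e1, e2]
        exact star_cutL _ (mainT t a u)
end

/-- `(t[α := ⟨α⟩(u ·)])†` reduces by zero or more linear
λ̄μμ̃-steps to `t†[α := μ̃y.⟨u† | y · α⟩]` (`y` fresh, realized by de Bruijn
lifting), and likewise for λμ-commands. -/
theorem dag_muprime_subst (a : ℕ) (u : Tm) :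
    (∀ t : Tm, Star LBStepT
      (dagT (msubT (sub1M a (Ct.push a u)) t))
      (bmsubT (bsub1M a (BCt.tmu (BCm.cut (brenLT Nat.succ (dagT u))
        (BCt.cons (BTm.var 0) (BCt.cvar a))))) (dagT t))) ∧
    (∀ c : Cm, Star LBStepC
      (dagC (msubC (sub1M a (Ct.push a u)) c))
      (bmsubC (bsub1M a (BCt.tmu (BCm.cut (brenLT Nat.succ (dagT u))
        (BCt.cons (BTm.var 0) (BCt.cvar a))))) (dagC c))) := by
  exact ⟨fun t => mainT t a u, fun c => mainC c a u⟩

end CHSim
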